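/- Let (M^n, g, ∇, φ, ξ, η) be a (β,φ)-Kenmotsu quadratic hypersurface of a locally metallic Riemannian manifold, with shape operator A satisfying (∇_X φ)Y = η(Y)AX + g(AX,Y)ξ, ∇_X ξ = pAX − φAX, Aξ = 0, and φ² = pφ + (I − η⊗ξ). Then A = βφ, φA = Aφ, and A² = βpA + β²(I − η⊗ξ). -/
import Mathlib


/-- Let `(M^n, g, ∇, φ, ξ, η)` be a `(β,φ)`-Kenmotsu quadratic hypersurface
of a locally metallic Riemannian manifold, with shape operator `A` satisfying
`(∇_X φ)Y = η(Y)AX + g(AX,Y)ξ`, `∇_X ξ = pAX − φAX`, `Aξ = 0` and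
`φ² = pφ + (I − η⊗ξ)` (the hypersurface case `q = 1`). Then `A = βφ`, `φA = Aφ` and
`A² = βpA + β²(I − η⊗ξ)`. -/
theorem Kenmotsu_quadratic_hypersurface_shape_operator
    {A V : Type*} [CommRing A] [AddCommGroup V] [Module A V]
    (g : V →ₗ[A] V →ₗ[A] A)
    (hgsym : ∀ X Y, g X Y = g Y X)
    (hgnondeg : ∀ X : V, (∀ Y, g X Y = 0) → X = 0)
    (nabla : V → V → V)
    (φ : V →ₗ[A] V) (ξ : V) (η : V → A) (p : ℕ) (hp : 0 < p)
    (hη : ∀ X, η X = g X ξ)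
    (hφξ : φ ξ = 0) (hηξ : η ξ = 1)
    (hφ2 : ∀ X, φ (φ X) = (p : A) • φ X + (X - η X • ξ))
    (hφsym : ∀ X Y, g (φ X) Y = g X (φ Y))
    (S : V →ₗ[A] V)
    (hSsym : ∀ X Y, g (S X) Y = g X (S Y))
    (hSξ : S ξ = 0)
    (hnablaXi : ∀ X, nabla X ξ = (p : A) • S X - φ (S X))
    (hGauss : ∀ X Y, nabla X (φ Y) - φ (nabla X Y) = η Y • S X + g (S X) Y • ξ)
    (β : A)
    (hKenmotsu : ∀ X Y, nabla X (φ Y) - φ (nabla X Y) = (β * g X (φ Y)) • ξ + (β * η Y) • φ X)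
    (hdη : ∀ X Y, g Y (nabla X ξ) - g X (nabla Y ξ) = 0) :
    (∀ X, S X = β • φ X) ∧
    (∀ X, φ (S X) = S (φ X)) ∧
    (∀ X, S (S X) = (β * (p : A)) • S X + (β * β) • (X - η X • ξ)) := by
  have hS : ∀ X, S X = β • φ X := by
    intro X
    have h := (hGauss X ξ).symm.trans (hKenmotsu X ξ)
    rw [hηξ, hφξ, hSsym, hSξ, map_zero] at h
    simpa [mul_one] using h
  refine ⟨hS, fun X => by rw [hS, hS, map_smul], fun X => ?_⟩
  rw [hS, hS X, map_smul, smul_smul, hφ2, smul_add, smul_smul, smul_smul]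
  ring_nf
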